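/- Let p > 1 and k > 0 be real, let W : (0,∞) → ℝ satisfy 0 < W(x) < x² and ((x⁴+W(x)²)/(x⁴−W(x)²))^(p−1) · W(x) = k for all x > 0, and suppose W has derivative v at some point x₀ > 0 (HasDerivAt W v x₀). Then v · ( 4(p−1)·x₀⁴·W(x₀)/(x₀⁸ − W(x₀)⁴) + 1/W(x₀) ) = 8(p−1)·x₀³·W(x₀)²/(x₀⁸ − W(x₀)⁴); in particular v > 0. -/

import Mathlib

/-- For real `p > 1`, `k > 0`, if `W` satisfies `0 < W x < x²` and
`((x⁴ + W x²)/(x⁴ − W x²))^(p−1) · W x = k` for all `x > 0` (real power `Real.rpow`),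
and `W` has derivative `v` at some `x₀ > 0`, then
`v · (4(p−1)·x₀⁴·W x₀/(x₀⁸ − W x₀⁴) + 1/W x₀) = 8(p−1)·x₀³·W x₀²/(x₀⁸ − W x₀⁴)`;
in particular `v > 0`. -/
theorem deriv_W_eq (p k : ℝ) (hp : 1 < p) (hk : 0 < k) (W : ℝ → ℝ)
    (hW : ∀ x > (0 : ℝ), 0 < W x ∧ W x < x ^ 2)
    (heq : ∀ x > (0 : ℝ), ((x ^ 4 + W x ^ 2) / (x ^ 4 - W x ^ 2)) ^ (p - 1) * W x = k)
    (x₀ v : ℝ) (hx₀ : 0 < x₀) (hd : HasDerivAt W v x₀) :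
    v * (4 * (p - 1) * x₀ ^ 4 * W x₀ / (x₀ ^ 8 - W x₀ ^ 4) + 1 / W x₀) =
      8 * (p - 1) * x₀ ^ 3 * W x₀ ^ 2 / (x₀ ^ 8 - W x₀ ^ 4) ∧ 0 < v := by
  -- positivity facts at x₀
  obtain ⟨hW0, hWlt⟩ := hW x₀ hx₀
  have hA0 : 0 < x₀ ^ 4 + W x₀ ^ 2 := by positivity
  have hB0 : 0 < x₀ ^ 4 - W x₀ ^ 2 := by nlinarith
  have hAB : 0 < x₀ ^ 8 - W x₀ ^ 4 := by nlinarith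
  -- the logarithmic function
  set g : ℝ → ℝ := fun x =>
    (p - 1) * (Real.log (x ^ 4 + W x ^ 2) - Real.log (x ^ 4 - W x ^ 2)) + Real.log (W x) with hg
  have hgconst : ∀ x ∈ Set.Ioi (0:ℝ), g x = Real.log k := by
    intro x hx
    obtain ⟨hw0, hwlt⟩ := hW x hx
    have ha : 0 < x ^ 4 + W x ^ 2 := by positivity
    have hb : 0 < x ^ 4 - W x ^ 2 := by nlinarith [sq_nonneg (W x), sq_nonneg x]
    have := heq x hx
    rw [← this, Real.log_mul (by positivity) hw0.ne', Real.log_rpow (by positivity),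
      Real.log_div ha.ne' hb.ne']
  -- derivative of g at x₀ computed by chain rule
  have hx4 : HasDerivAt (fun x : ℝ => x ^ 4) (4 * x₀ ^ 3) x₀ := by
    simpa using hasDerivAt_pow 4 x₀
  have hW2 : HasDerivAt (fun x => W x ^ 2) (2 * W x₀ * v) x₀ := by
    simpa using hd.fun_pow 2
  have hA : HasDerivAt (fun x => x ^ 4 + W x ^ 2) (4 * x₀ ^ 3 + 2 * W x₀ * v) x₀ := hx4.add hW2
  have hB : HasDerivAt (fun x => x ^ 4 - W x ^ 2) (4 * x₀ ^ 3 - 2 * W x₀ * v) x₀ := hx4.sub hW2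
  have hlogA := hA.log hA0.ne'
  have hlogB := hB.log hB0.ne'
  have hlogW := hd.log hW0.ne'
  have hgD : HasDerivAt g
      ((p - 1) * ((4 * x₀ ^ 3 + 2 * W x₀ * v) / (x₀ ^ 4 + W x₀ ^ 2)
        - (4 * x₀ ^ 3 - 2 * W x₀ * v) / (x₀ ^ 4 - W x₀ ^ 2)) + v / W x₀) x₀ :=
    ((hlogA.sub hlogB).const_mul (p - 1)).add hlogW
  have hg0 : HasDerivAt g 0 x₀ := by
    refine (hasDerivAt_const x₀ (Real.log k)).congr_of_eventuallyEq ?_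
    filter_upwards [isOpen_Ioi.mem_nhds (show x₀ ∈ Set.Ioi (0:ℝ) from hx₀)] with x hx
    exact hgconst x hx
  have hD0 : (p - 1) * ((4 * x₀ ^ 3 + 2 * W x₀ * v) / (x₀ ^ 4 + W x₀ ^ 2)
      - (4 * x₀ ^ 3 - 2 * W x₀ * v) / (x₀ ^ 4 - W x₀ ^ 2)) + v / W x₀ = 0 :=
    hgD.unique hg0
  have hfact : x₀ ^ 8 - W x₀ ^ 4 = (x₀ ^ 4 - W x₀ ^ 2) * (x₀ ^ 4 + W x₀ ^ 2) := by ring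
  have hmain : v * (4 * (p - 1) * x₀ ^ 4 * W x₀ / (x₀ ^ 8 - W x₀ ^ 4) + 1 / W x₀) =
      8 * (p - 1) * x₀ ^ 3 * W x₀ ^ 2 / (x₀ ^ 8 - W x₀ ^ 4) := by
    rw [hfact]
    field_simp at hD0 ⊢
    nlinarith [hD0, sq_nonneg (W x₀)]
  refine ⟨hmain, ?_⟩
  have hC : 0 < 4 * (p - 1) * x₀ ^ 4 * W x₀ / (x₀ ^ 8 - W x₀ ^ 4) + 1 / W x₀ := by
    have h1 : 0 < 4 * (p - 1) * x₀ ^ 4 * W x₀ / (x₀ ^ 8 - W x₀ ^ 4) := by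
      apply div_pos ?_ hAB; nlinarith [mul_pos (pow_pos hx₀ 4) hW0, sub_pos.mpr hp]
    have h2 : 0 < 1 / W x₀ := by positivity
    linarith
  have hR : 0 < 8 * (p - 1) * x₀ ^ 3 * W x₀ ^ 2 / (x₀ ^ 8 - W x₀ ^ 4) := by
    apply div_pos ?_ hAB; nlinarith [mul_pos (pow_pos hx₀ 3) (pow_pos hW0 2), sub_pos.mpr hp]
  nlinarith [hmain, hC, hR]
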